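/- There exist a number field k and an infinite set S ⊆ k such that for every t ∈ S, all complex roots of the equation 3z⁴ − 4z³ = t lie in k. -/

import Mathlib

/-! Auxiliary definitions: a rational one-parameter family of values `t` for which the
quartic `3z⁴ - 4z³ = t` splits completely over `ℚ(√-3)`. -/

/-- `m` parameter: parametrizes the conic `3m² + 2m + 3 = 3y²` with `y = 1 + s·m`. -/
def mfun (s : ℚ) : ℚ := 2 * (3 * s - 1) / (3 * (1 - s ^ 2))

/-- one rational root `a` of `3z⁴-4z³ = t`; the point `(a, m·a)` lies on `f(z) = f(w)`. -/
def afun (m : ℚ) : ℚ := 4 * (m ^ 2 + m + 1) / (3 * (m + 1) * (m ^ 2 + 1))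

/-- sum of the remaining two roots. -/
def S2fun (m : ℚ) : ℚ := 4 / 3 - afun m * (1 + m)

/-- product of the remaining two roots. -/
def Pfun (m : ℚ) : ℚ :=
  ((S2fun m) ^ 2 + 16 * m ^ 2 * (3 * m ^ 2 + 2 * m + 3) / (9 * (m + 1) ^ 2 * (m ^ 2 + 1) ^ 2)) / 4

/-- `Q`, with the remaining two roots `(S2 ± Q·√-3)/2`. -/
def Qfun (s : ℚ) : ℚ :=
  4 * mfun s * (1 + s * mfun s) / (3 * (mfun s + 1) * ((mfun s) ^ 2 + 1))

/-- the value `t`. -/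
def tfun (s : ℚ) : ℚ := 3 * (afun (mfun s)) ^ 4 - 4 * (afun (mfun s)) ^ 3

lemma mfun_bounds {s : ℚ} (hs : 4 ≤ s) : -(1/2) < mfun s ∧ mfun s < 0 := by
  have hd : 3 * (1 - s ^ 2) < 0 := by nlinarith
  constructor
  · rw [mfun, lt_div_iff_of_neg hd]
    nlinarith [mul_nonneg (by linarith : (0:ℚ) ≤ s) (by linarith : (0:ℚ) ≤ s - 4)]
  · rw [mfun]
    apply div_neg_of_pos_of_neg _ hd
    linarith

lemma mfun_mono {s1 s2 : ℚ} (h1 : 4 ≤ s1) (h : s1 < s2) : mfun s1 < mfun s2 := by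
  have hd1 : (1 - s1 ^ 2) ≠ 0 := by nlinarith
  have hd2 : (1 - s2 ^ 2) ≠ 0 := by nlinarith
  have key : mfun s2 - mfun s1 =
      6 * (s2 - s1) * (3 + 3 * s1 * s2 - (s1 + s2)) / (9 * (1 - s1 ^ 2) * (1 - s2 ^ 2)) := by
    rw [mfun, mfun]
    field_simp
    ring
  have hnum : 0 < 6 * (s2 - s1) * (3 + 3 * s1 * s2 - (s1 + s2)) := by
    have hpos : 0 < 3 + 3 * s1 * s2 - (s1 + s2) := by nlinarith
    have : 0 < s2 - s1 := by linarith
    positivity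
  have hden : 0 < 9 * (1 - s1 ^ 2) * (1 - s2 ^ 2) := by nlinarith [mul_pos (show (0:ℚ) < s1^2-1 by nlinarith) (show (0:ℚ) < s2^2-1 by nlinarith)]
  have : 0 < mfun s2 - mfun s1 := by
    rw [key]; exact div_pos hnum hden
  linarith

lemma afun_denpos {m : ℚ} (h0 : -(1/2) < m) : 0 < 3 * (m + 1) * (m ^ 2 + 1) := by
  have h1 : 0 < m + 1 := by linarith
  have h2 : 0 < m ^ 2 + 1 := by positivity
  positivity

lemma afun_anti {m1 m2 : ℚ} (h0 : -(1/2) < m1) (h : m1 < m2) (h2 : m2 < 0) :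
    afun m2 < afun m1 := by
  have hd1 : 0 < 3 * (m1 + 1) * (m1 ^ 2 + 1) := afun_denpos h0
  have hd2 : 0 < 3 * (m2 + 1) * (m2 ^ 2 + 1) := afun_denpos (by linarith)
  have key : afun m1 - afun m2 =
      4 * (m2 - m1) * ((m1 * m2) ^ 2 + (m1 * m2) * (m1 + m2 + 1) + m1 ^ 2 + m2 ^ 2) /
        ((3 * (m1 + 1) * (m1 ^ 2 + 1)) * (3 * (m2 + 1) * (m2 ^ 2 + 1))) * 3 := by
    rw [afun, afun]
    have hn1 : m1 + 1 ≠ 0 := by linarith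
    have hn2 : m2 + 1 ≠ 0 := by linarith
    have hq1 : m1 ^ 2 + 1 ≠ 0 := by positivity
    have hq2 : m2 ^ 2 + 1 ≠ 0 := by positivity
    field_simp
    ring
  have hu : 0 < m1 * m2 := mul_pos_of_neg_of_neg (by linarith) h2
  have hnum : 0 < 4 * (m2 - m1) * ((m1 * m2) ^ 2 + (m1 * m2) * (m1 + m2 + 1) + m1 ^ 2 + m2 ^ 2) := by
    have hb : 0 < (m1 * m2) ^ 2 + (m1 * m2) * (m1 + m2 + 1) + m1 ^ 2 + m2 ^ 2 := by
      have h3 : 0 < m1 + m2 + 1 := by linarith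
      nlinarith [mul_pos hu h3, sq_nonneg (m1 * m2), sq_nonneg m1, sq_nonneg m2]
    nlinarith
  have : 0 < afun m1 - afun m2 := by
    rw [key]
    have := div_pos hnum (mul_pos hd1 hd2)
    linarith
  linarith

lemma afun_gt {m : ℚ} (h0 : -(1/2) < m) (h1 : m < 0) : 4 / 3 < afun m := by
  have hd : 0 < 3 * (m + 1) * (m ^ 2 + 1) := afun_denpos h0
  have key : afun m - 4 / 3 = (-(4 * m ^ 3)) / (3 * (m + 1) * (m ^ 2 + 1)) := by
    rw [afun]
    have hn1 : m + 1 ≠ 0 := by linarith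
    have hq1 : m ^ 2 + 1 ≠ 0 := by positivity
    field_simp
    ring
  have hnum : 0 < -(4 * m ^ 3) := by
    have : 0 < -m := by linarith
    nlinarith [mul_pos (mul_pos this this) this]
  have : 0 < afun m - 4 / 3 := by rw [key]; exact div_pos hnum hd
  linarith

lemma tfun_anti {s1 s2 : ℚ} (h1 : 4 ≤ s1) (h : s1 < s2) : tfun s2 < tfun s1 := by
  obtain ⟨hm1a, hm1b⟩ := mfun_bounds h1
  obtain ⟨hm2a, hm2b⟩ := mfun_bounds (le_of_lt (lt_of_le_of_lt h1 h))
  have hmm : mfun s1 < mfun s2 := mfun_mono h1 h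
  have ha : afun (mfun s2) < afun (mfun s1) := afun_anti hm1a hmm hm2b
  have ha2 : 4 / 3 < afun (mfun s2) := afun_gt hm2a hm2b
  set a1 := afun (mfun s1)
  set a2 := afun (mfun s2)
  have h4 : 0 < 3 * a2 - 4 := by linarith
  have h5 : 0 < 3 * a1 - 4 := by linarith
  have ha2p : 0 < a2 := by linarith
  have ha1p : 0 < a1 := by linarith
  rw [tfun, tfun]
  nlinarith [mul_pos (mul_pos ha1p ha1p) h5, mul_pos (mul_pos ha1p ha2p) h5,
    mul_pos (mul_pos ha2p ha2p) h5, mul_pos (mul_pos (mul_pos ha2p ha2p) ha2p) (sub_pos.2 ha),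
    mul_pos (mul_pos ha1p ha1p) (sub_pos.2 ha), mul_pos (mul_pos ha1p ha2p) (sub_pos.2 ha),
    mul_pos (mul_pos ha2p ha2p) (sub_pos.2 ha)]

/-- the conic identity: `y = 1 + s·m(s)` satisfies `3y² = 3m² + 2m + 3`. -/
lemma conic {s : ℚ} (hs : (1 - s ^ 2) ≠ 0) :
    3 * (1 + s * mfun s) ^ 2 = 3 * (mfun s) ^ 2 + 2 * (mfun s) + 3 := by
  rw [mfun]
  field_simp
  ring

lemma vieta_e2 {m : ℚ} (h1 : m + 1 ≠ 0) :
    m * (afun m) ^ 2 + (afun m + m * afun m) * S2fun m + Pfun m = 0 := by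
  have h2 : (m : ℚ) ^ 2 + 1 ≠ 0 := by positivity
  rw [Pfun, S2fun, afun]
  field_simp
  ring

lemma vieta_e3 {m : ℚ} (h1 : m + 1 ≠ 0) :
    m * (afun m) ^ 2 * S2fun m + (afun m + m * afun m) * Pfun m = 0 := by
  have h2 : (m : ℚ) ^ 2 + 1 ≠ 0 := by positivity
  rw [Pfun, S2fun, afun]
  field_simp
  ring

lemma vieta_e4 {m : ℚ} (h1 : m + 1 ≠ 0) :
    3 * (afun m) ^ 4 - 4 * (afun m) ^ 3 = -3 * (m * (afun m) ^ 2) * Pfun m := by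
  have h2 : (m : ℚ) ^ 2 + 1 ≠ 0 := by positivity
  rw [Pfun, S2fun, afun]
  field_simp
  ring

lemma vieta_eq {s : ℚ} (hs : (1 - s ^ 2) ≠ 0) (h1 : mfun s + 1 ≠ 0) :
    3 * (Qfun s) ^ 2 = 4 * Pfun (mfun s) - (S2fun (mfun s)) ^ 2 := by
  have h2 : (mfun s : ℚ) ^ 2 + 1 ≠ 0 := by positivity
  have hy : (1 + s * mfun s) ^ 2 = ((3 * (mfun s) ^ 2 + 2 * (mfun s) + 3)) / 3 := by
    have := conic hs
    linarith
  rw [Qfun]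
  rw [div_pow, mul_pow, mul_pow, hy]
  rw [Pfun, S2fun]
  field_simp
  ring

/-- complex factorization lemma. -/
lemma keyfactor (M A S2 Q P T c z : ℂ) (hc : c ^ 2 = -3)
    (e1 : A + M * A + S2 = 4 / 3)
    (e2 : M * A ^ 2 + (A + M * A) * S2 + P = 0)
    (e3 : M * A ^ 2 * S2 + (A + M * A) * P = 0)
    (e4 : T = -3 * (M * A ^ 2) * P)
    (eq : 3 * Q ^ 2 = 4 * P - S2 ^ 2)
    (hz : 3 * z ^ 4 - 4 * z ^ 3 = T) :
    (z - A) * (z - M * A) * (z - (S2 + Q * c) / 2) * (z - (S2 - Q * c) / 2) = 0 := by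
  linear_combination (1/3) * hz - z ^ 3 * e1 + z ^ 2 * e2 - z * e3 + (1/3) * e4
    + (1/4) * (z ^ 2 - (A + M * A) * z + M * A ^ 2) * eq
    - (Q ^ 2 / 4) * (z ^ 2 - (A + M * A) * z + M * A ^ 2) * hc

/-- There exist a number field `k` (a subfield of `ℂ` finite over `ℚ`) and an infinite set
`S ⊆ k` such that for every `t ∈ S` all complex roots of `3z⁴ − 4z³ = t` lie in `k`. -/
theorem stmt17 :
    ∃ k : IntermediateField ℚ ℂ, FiniteDimensional ℚ ↥k ∧
      ∃ S : Set ℂ, S.Infinite ∧ S ⊆ (k : Set ℂ) ∧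
        ∀ t ∈ S, ∀ z : ℂ, 3 * z ^ 4 - 4 * z ^ 3 = t → z ∈ k := by
  set c : ℂ := Complex.I * (Real.sqrt 3 : ℝ) with hcdef
  have hc : c ^ 2 = -3 := by
    rw [hcdef, mul_pow, Complex.I_sq]
    rw [show ((Real.sqrt 3 : ℝ) : ℂ) ^ 2 = (((Real.sqrt 3) ^ 2 : ℝ) : ℂ) by push_cast; ring]
    rw [Real.sq_sqrt (by norm_num : (3:ℝ) ≥ 0)]
    norm_num
  have hint : IsIntegral ℚ c := by
    refine ⟨Polynomial.X ^ 2 + Polynomial.C 3, ?_, ?_⟩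
    · apply Polynomial.monic_X_pow_add
      simpa using Polynomial.degree_C_le.trans (by norm_num)
    · simp [Polynomial.eval₂, hc]
  refine ⟨IntermediateField.adjoin ℚ {c}, IntermediateField.adjoin.finiteDimensional hint, ?_⟩
  set k := IntermediateField.adjoin ℚ {c} with hk
  have hck : c ∈ k := IntermediateField.mem_adjoin_simple_self ℚ c
  have hratk : ∀ q : ℚ, (q : ℂ) ∈ k := by
    intro q
    rw [← eq_ratCast (algebraMap ℚ ℂ) q]
    exact IntermediateField.algebraMap_mem k q
  refine ⟨Set.range (fun n : ℕ => ((tfun ((n : ℚ) + 4) : ℚ) : ℂ)), ?_, ?_, ?_⟩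
  · apply Set.infinite_range_of_injective
    have hanti : StrictAnti (fun n : ℕ => tfun ((n : ℚ) + 4)) := by
      intro n1 n2 hlt
      apply tfun_anti (by norm_num : (4:ℚ) ≤ (n1:ℚ) + 4)
      have : (n1 : ℚ) < (n2 : ℚ) := by exact_mod_cast hlt
      linarith
    intro n1 n2 h
    simp only at h
    exact hanti.injective (by exact_mod_cast h)
  · rintro x ⟨n, rfl⟩
    exact hratk _
  · rintro t ⟨n, rfl⟩ z hz
    set s : ℚ := (n : ℚ) + 4 with hsdef
    have hs4 : (4 : ℚ) ≤ s := by rw [hsdef]; norm_num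
    obtain ⟨hma, hmb⟩ := mfun_bounds hs4
    have hs2 : (1 - s ^ 2) ≠ 0 := by nlinarith
    have hm1 : mfun s + 1 ≠ 0 := by
      intro h; rw [show mfun s = -1 by linarith] at hma; norm_num at hma
    -- rational data
    set m := mfun s with hmdef
    set a := afun m with hadef
    set S2 := S2fun m with hS2def
    set P := Pfun m with hPdef
    set Q := Qfun s with hQdef
    have e1Q : a + m * a + S2 = 4 / 3 := by rw [hS2def, S2fun, ← hadef]; ring
    have e2Q := vieta_e2 hm1
    have e3Q := vieta_e3 hm1
    have e4Q : tfun s = -3 * (m * a ^ 2) * P := by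
      rw [tfun]; exact vieta_e4 hm1
    have eqQ := vieta_eq hs2 hm1
    -- complex versions
    have e1C : ((a : ℂ) + (m : ℂ) * (a : ℂ) + (S2 : ℂ)) = 4 / 3 := by
      have := congrArg (fun q : ℚ => (q : ℂ)) e1Q; push_cast at this; exact this
    have e2C : (m : ℂ) * (a : ℂ) ^ 2 + ((a : ℂ) + (m : ℂ) * (a : ℂ)) * (S2 : ℂ) + (P : ℂ) = 0 := by
      have := congrArg (fun q : ℚ => (q : ℂ)) e2Q; push_cast at this; exact this
    have e3C : (m : ℂ) * (a : ℂ) ^ 2 * (S2 : ℂ) + ((a : ℂ) + (m : ℂ) * (a : ℂ)) * (P : ℂ) = 0 := by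
      have := congrArg (fun q : ℚ => (q : ℂ)) e3Q; push_cast at this; exact this
    have e4C : ((tfun s : ℚ) : ℂ) = -3 * ((m : ℂ) * (a : ℂ) ^ 2) * (P : ℂ) := by
      have := congrArg (fun q : ℚ => (q : ℂ)) e4Q; push_cast at this; exact_mod_cast this
    have eqC : 3 * (Q : ℂ) ^ 2 = 4 * (P : ℂ) - (S2 : ℂ) ^ 2 := by
      have := congrArg (fun q : ℚ => (q : ℂ)) eqQ; push_cast at this; exact this
    have hfac := keyfactor (m : ℂ) (a : ℂ) (S2 : ℂ) (Q : ℂ) (P : ℂ) ((tfun s : ℚ) : ℂ) c z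
      hc e1C e2C e3C e4C eqC hz
    have two_ne : (2 : ℂ) ≠ 0 := by norm_num
    rcases mul_eq_zero.1 hfac with h12 | h4
    · rcases mul_eq_zero.1 h12 with h123 | h3
      · rcases mul_eq_zero.1 h123 with h1 | h2
        · rw [sub_eq_zero.1 h1]; exact hratk a
        · rw [sub_eq_zero.1 h2]
          exact mul_mem (hratk m) (hratk a)
      · rw [sub_eq_zero.1 h3]
        exact div_mem (add_mem (hratk S2) (mul_mem (hratk Q) hck)) (by exact_mod_cast hratk 2)
    · rw [sub_eq_zero.1 h4]
      exact div_mem (sub_mem (hratk S2) (mul_mem (hratk Q) hck)) (by exact_mod_cast hratk 2)
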